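/- For almost every x ∈ (1, 2) (with respect to Lebesgue measure), there exists N₀ ∈ ℕ such that the set {⌊x^n⌋ : n ≥ N₀} is a Sidon set. -/

import Mathlib

open MeasureTheory Set Filter Topology

namespace Stmt7

/-- Quantitative bound: on `[α,β]` where `F'` is nonnegative, the set where `|F| < δ`
and `F' ≥ θ` has measure at most `2δ/θ`. -/
lemma small_of_deriv (F F' : ℝ → ℝ) (hd : ∀ x, HasDerivAt F (F' x) x)
    (hF'c : Continuous F') (α β δ θ : ℝ) (hθ : 0 < θ)
    (hsign : ∀ x ∈ Set.Ioo α β, 0 ≤ F' x) :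
    volume (Set.Icc α β ∩ {x | |F x| < δ} ∩ {x | θ ≤ F' x})
      ≤ ENNReal.ofReal (2 * δ / θ) := by
  have hFc : Continuous F := by
    rw [continuous_iff_continuousAt]; exact fun x => (hd x).continuousAt
  set S := Set.Icc α β ∩ {x | |F x| < δ} ∩ {x | θ ≤ F' x} with hSdef
  have hSsub : S ⊆ Set.Icc α β := fun x hx => hx.1.1
  have hSm : MeasurableSet S :=
    (measurableSet_Icc.inter (isOpen_lt hFc.abs continuous_const).measurableSet).inter
      (isClosed_le continuous_const hF'c).measurableSet
  rcases S.eq_empty_or_nonempty with hE | hne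
  · rw [hE]; simp
  have hbb : BddBelow S := BddBelow.mono hSsub bddBelow_Icc
  have hba : BddAbove S := BddAbove.mono hSsub bddAbove_Icc
  set m := sInf S with hm
  set M := sSup S with hM
  have hmM : m ≤ M := csInf_le_csSup hne hbb hba
  have hmcl : m ∈ closure S := csInf_mem_closure hne hbb
  have hMcl : M ∈ closure S := csSup_mem_closure hne hba
  have hcl : closure S ⊆ {x | |F x| ≤ δ} :=
    closure_minimal (fun x hx => show |F x| ≤ δ from le_of_lt hx.1.2) (isClosed_le hFc.abs continuous_const)
  have hsub2 : S ⊆ Set.Icc m M := fun x hx => ⟨csInf_le hbb hx, le_csSup hba hx⟩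
  have hIccsub : Set.Icc m M ⊆ Set.Icc α β :=
    Set.Icc_subset_Icc (le_csInf hne fun x hx => (hSsub hx).1)
      (csSup_le hne fun x hx => (hSsub hx).2)
  have hvolfin : volume S ≠ ⊤ :=
    ne_top_of_le_ne_top (ne_of_lt measure_Icc_lt_top) (measure_mono hSsub)
  have key : θ * (volume S).toReal ≤ 2 * δ := by
    have hint : IntegrableOn F' (Set.Icc m M) := hF'c.integrableOn_Icc
    have hintS : IntegrableOn F' S := hint.mono_set hsub2
    have h1 : ∫ _x in S, θ ∂volume = (volume S).toReal * θ := by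
      rw [setIntegral_const]; simp [smul_eq_mul, measureReal_def]
    have hconst : IntegrableOn (fun _ => θ) S := by
      refine integrableOn_const (ne_of_lt ?_)
      exact lt_of_le_of_lt (measure_mono hSsub) measure_Icc_lt_top
    have h2 : ∫ _x in S, θ ∂volume ≤ ∫ x in S, F' x ∂volume :=
      setIntegral_mono_on hconst hintS hSm (fun x hx => hx.2)
    have h3 : ∫ x in S, F' x ∂volume ≤ ∫ x in Set.Icc m M, F' x ∂volume := by
      refine setIntegral_mono_set hint ?_ (HasSubset.Subset.eventuallyLE hsub2)
      rw [EventuallyLE, ae_restrict_iff' measurableSet_Icc]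
      rw [ae_iff]
      refine measure_mono_null (fun x hx => ?_) (((Set.finite_singleton α).insert β).measure_zero volume)
      simp only [Set.mem_setOf_eq, not_forall] at hx
      obtain ⟨hx1, hx2⟩ := hx
      by_contra hcon
      simp only [Set.mem_insert_iff, Set.mem_singleton_iff] at hcon
      push_neg at hcon
      have hxa : x ∈ Set.Icc α β := hIccsub hx1
      have : x ∈ Set.Ioo α β := by
        constructor
        · rcases lt_or_eq_of_le hxa.1 with h | h
          · exact h
          · exact absurd h.symm hcon.2
        · rcases lt_or_eq_of_le hxa.2 with h | h
          · exact h
          · exact absurd h hcon.1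
      exact hx2 (hsign x this)
    have h4 : ∫ x in Set.Icc m M, F' x ∂volume = F M - F m := by
      rw [integral_Icc_eq_integral_Ioc, ← intervalIntegral.integral_of_le hmM]
      exact intervalIntegral.integral_eq_sub_of_hasDerivAt (fun x _ => hd x)
        (hF'c.intervalIntegrable m M)
    have h5 : F M - F m ≤ 2 * δ := by
      have hm' : |F m| ≤ δ := hcl hmcl
      have hM' : |F M| ≤ δ := hcl hMcl
      rw [abs_le] at hm' hM'
      linarith [hm'.1, hM'.2]
    calc θ * (volume S).toReal = ∫ _x in S, θ ∂volume := by rw [h1]; ring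
      _ ≤ ∫ x in S, F' x ∂volume := h2
      _ ≤ ∫ x in Set.Icc m M, F' x ∂volume := h3
      _ = F M - F m := h4
      _ ≤ 2 * δ := h5
  have htR : (volume S).toReal ≤ 2 * δ / θ := by
    rw [le_div_iff₀ hθ]; linarith
  calc volume S = ENNReal.ofReal ((volume S).toReal) := (ENNReal.ofReal_toReal hvolfin).symm
    _ ≤ ENNReal.ofReal (2 * δ / θ) := ENNReal.ofReal_le_ofReal htR

lemma upward_pos (A B x y : ℝ) (m k : ℕ) (hk : k ≤ m) (hA : 0 ≤ A)
    (hx : 0 < x) (hxy : x ≤ y) (h : 0 < A * x ^ m - B * x ^ k) :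
    0 < A * y ^ m - B * y ^ k := by
  have hy : 0 < y := lt_of_lt_of_le hx hxy
  have hxk : (0:ℝ) < x ^ k := pow_pos hx k
  have hyk : (0:ℝ) < y ^ k := pow_pos hy k
  have hsx : x ^ k * x ^ (m - k) = x ^ m := by rw [← pow_add]; congr 1; omega
  have hsy : y ^ k * y ^ (m - k) = y ^ m := by rw [← pow_add]; congr 1; omega
  have h1 : 0 < A * x ^ (m - k) - B := by
    by_contra hcon
    push_neg at hcon
    nlinarith
  have h2 : A * x ^ (m-k) ≤ A * y ^ (m-k) :=
    mul_le_mul_of_nonneg_left (pow_le_pow_left₀ hx.le hxy _) hA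
  nlinarith


lemma chain (c : ℝ) (hc : 1 < c) (a b e : ℕ)
    (hba : b < a) (heb : e ≤ b) (he1 : 1 ≤ e)
    (δ θ₁ θ₂ : ℝ) (hθ₁ : 0 < θ₁) (hθ₂ : 0 < θ₂) :
    volume (Set.Icc c 2 ∩ {x | |x ^ a - x ^ b - x ^ e + 1| < δ})
      ≤ ENNReal.ofReal (2*δ/θ₁) + ENNReal.ofReal (2*δ/θ₁) + ENNReal.ofReal (2*δ/θ₁)
        + (ENNReal.ofReal (2*θ₁/θ₂) + ENNReal.ofReal (2*θ₁/θ₂) + ENNReal.ofReal (4*θ₂)) := by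
  set h : ℝ → ℝ := fun x => x ^ a - x ^ b - x ^ e + 1 with hhdef
  set h' : ℝ → ℝ := fun x => (a:ℝ) * x ^ (a-1) - (b:ℝ) * x ^ (b-1) - (e:ℝ) * x ^ (e-1) with hh'def
  set u : ℝ → ℝ := fun x => (a:ℝ) * x ^ (a-e) - (b:ℝ) * x ^ (b-e) - (e:ℝ) with hudef
  set u' : ℝ → ℝ := fun x => ((a*(a-e):ℕ):ℝ) * x ^ (a-e-1) - ((b*(b-e):ℕ):ℝ) * x ^ (b-e-1)
    with hu'def
  set v : ℝ → ℝ := fun x => ((a*(a-e):ℕ):ℝ) * x ^ (a-b) - ((b*(b-e):ℕ):ℝ) with hvdef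
  set v' : ℝ → ℝ := fun x => ((a*(a-e)*(a-b):ℕ):ℝ) * x ^ (a-b-1) with hv'def
  have hdh : ∀ x, HasDerivAt h (h' x) x := fun x =>
    (((hasDerivAt_pow a x).sub (hasDerivAt_pow b x)).sub (hasDerivAt_pow e x)).add_const 1
  have hdu : ∀ x, HasDerivAt u (u' x) x := by
    intro x
    have h0 := (((hasDerivAt_pow (a-e) x).const_mul (a:ℝ)).sub
      ((hasDerivAt_pow (b-e) x).const_mul (b:ℝ))).sub_const (e:ℝ)
    convert h0 using 1
    rfl
    rfl
    rfl
    rw [hu'def]; push_cast; ring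
  have hdv : ∀ x, HasDerivAt v (v' x) x := by
    intro x
    have h0 := ((hasDerivAt_pow (a-b) x).const_mul ((a*(a-e):ℕ):ℝ)).sub_const ((b*(b-e):ℕ):ℝ)
    convert h0 using 1
    rfl
    rfl
    rw [hv'def]; push_cast; ring
  have hch' : Continuous h' := by simp only [hh'def]; fun_prop
  have hcu : Continuous u := by simp only [hudef]; fun_prop
  have hcu' : Continuous u' := by simp only [hu'def]; fun_prop
  have hcv' : Continuous v' := by simp only [hv'def]; fun_prop
  have hid1 : ∀ x : ℝ, h' x = x^(e-1) * u x := by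
    intro x
    have p1 : x ^ (e-1) * x ^ (a-e) = x ^ (a-1) := by rw [← pow_add]; congr 1; omega
    have p2 : x ^ (e-1) * x ^ (b-e) = x ^ (b-1) := by rw [← pow_add]; congr 1; omega
    simp only [hh'def, hudef]
    linear_combination (-(a:ℝ))*p1 + (b:ℝ)*p2
  -- basic facts on [c,2]
  have hone : ∀ x ∈ Set.Icc c 2, (1:ℝ) ≤ x := fun x hx => le_trans hc.le hx.1
  have hpow1 : ∀ (x:ℝ), 1 ≤ x → ∀ n : ℕ, (1:ℝ) ≤ x ^ n := by
    intro x hx n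
    calc (1:ℝ) = 1^n := (one_pow n).symm
      _ ≤ x^n := pow_le_pow_left₀ (by norm_num) hx n
  have habs : ∀ x ∈ Set.Icc c 2, |u x| ≤ |h' x| := by
    intro x hx
    have h1 : (1:ℝ) ≤ x ^ (e-1) := hpow1 x (hone x hx) _
    rw [hid1 x, abs_mul, abs_of_nonneg (by linarith : (0:ℝ) ≤ x ^ (e-1))]
    nlinarith [abs_nonneg (u x)]
  have hsignu' : ∀ x y : ℝ, c ≤ x → x ≤ y → 0 < u' x → 0 < u' y := by
    intro x y hcx hxy hp
    have hx0 : (0:ℝ) < x := lt_trans one_pos (lt_of_lt_of_le hc hcx)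
    exact upward_pos _ _ x y _ _ (by omega : b-e-1 ≤ a-e-1) (by positivity) hx0 hxy hp
  -- Level 3
  have L3 : volume (Set.Icc c 2 ∩ {x | |v x| < 2*θ₂}) ≤ ENNReal.ofReal (4*θ₂) := by
    have hv'1 : ∀ x ∈ Set.Icc c 2, (1:ℝ) ≤ v' x := by
      intro x hx
      have h1 : (1:ℝ) ≤ ((a*(a-e)*(a-b):ℕ):ℝ) := by
        have : 1 ≤ a*(a-e)*(a-b) := by
          have h2 : 1 ≤ a := by omega
          have h3 : 1 ≤ a - e := by omega
          have h4 : 1 ≤ a - b := by omega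
          calc 1 = 1*1*1 := by norm_num
            _ ≤ a*(a-e)*(a-b) := Nat.mul_le_mul (Nat.mul_le_mul h2 h3) h4
        exact_mod_cast this
      have h2 : (1:ℝ) ≤ x ^ (a-b-1) := hpow1 x (hone x hx) _
      simp only [hv'def]
      nlinarith
    have hsub : Set.Icc c 2 ∩ {x | |v x| < 2*θ₂}
        ⊆ Set.Icc c 2 ∩ {x | |v x| < 2*θ₂} ∩ {x | (1:ℝ) ≤ v' x} :=
      fun x hx => ⟨hx, hv'1 x hx.1⟩
    refine le_trans (measure_mono hsub) (le_trans
      (small_of_deriv v v' hdv hcv' c 2 (2*θ₂) 1 one_pos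
        (fun x hx => le_trans zero_le_one (hv'1 x (Set.Ioo_subset_Icc_self hx)))) ?_)
    apply ENNReal.ofReal_le_ofReal
    rw [div_one]; linarith
  -- Level 2
  have L2 : volume (Set.Icc c 2 ∩ {x | |u x| < θ₁})
      ≤ ENNReal.ofReal (2*θ₁/θ₂) + ENNReal.ofReal (2*θ₁/θ₂) + ENNReal.ofReal (4*θ₂) := by
    have hsplit : Set.Icc c 2 ∩ {x | |u x| < θ₁} ⊆
        (Set.Icc c 2 ∩ {x | |u x| < θ₁} ∩ {x | θ₂ ≤ |u' x|})
          ∪ (Set.Icc c 2 ∩ {x | |v x| < 2*θ₂}) := by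
      intro x hx
      rcases le_or_gt θ₂ |u' x| with hca | hca
      · exact Or.inl ⟨hx, hca⟩
      · refine Or.inr ⟨hx.1, ?_⟩
        rcases eq_or_lt_of_le heb with hbe | hbe
        · -- b = e
          have hbe0 : b - e = 0 := by omega
          have hz : ((b*(b-e):ℕ):ℝ) = 0 := by rw [hbe0]; push_cast; ring
          have hvx : v x = x * u' x := by
            have p1 : x * x^(a-e-1) = x^(a-b) := by
              rw [← pow_succ']; congr 1; omega
            simp only [hvdef, hu'def, hz]
            linear_combination ((a*(a-e):ℕ):ℝ) * p1.symm
          have hx2 : x ≤ 2 := hx.1.2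
          have hx0 : (0:ℝ) ≤ x := by have := hone x hx.1; linarith
          show |v x| < 2*θ₂
          rw [hvx, abs_mul, abs_of_nonneg hx0]
          have h1 : |u' x| * x ≤ |u' x| * 2 :=
            mul_le_mul_of_nonneg_left hx2 (abs_nonneg _)
          nlinarith [abs_nonneg (u' x)]
        · -- e < b
          have hid2 : u' x = x^(b-e-1) * v x := by
            have p1 : x^(b-e-1) * x^(a-b) = x^(a-e-1) := by rw [← pow_add]; congr 1; omega
            simp only [hu'def, hvdef]
            linear_combination (-((a*(a-e):ℕ):ℝ))*p1
          have h1 : (1:ℝ) ≤ x ^ (b-e-1) := hpow1 x (hone x hx.1) _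
          have h2 : |u' x| = x^(b-e-1) * |v x| := by
            rw [hid2, abs_mul, abs_of_nonneg (by linarith : (0:ℝ) ≤ x ^ (b-e-1))]
          show |v x| < 2*θ₂
          nlinarith [abs_nonneg (v x), abs_nonneg (u' x)]
    refine le_trans (measure_mono hsplit) (le_trans (measure_union_le _ _) ?_)
    have hXbound : volume (Set.Icc c 2 ∩ {x | |u x| < θ₁} ∩ {x | θ₂ ≤ |u' x|})
        ≤ ENNReal.ofReal (2*θ₁/θ₂) + ENNReal.ofReal (2*θ₁/θ₂) := by
      set W1 := Set.Icc c 2 ∩ {x | u' x ≤ 0} with hW1def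
      have hW1c : IsCompact W1 :=
        isCompact_Icc.inter_right (isClosed_le hcu' continuous_const)
      rcases W1.eq_empty_or_nonempty with hW1e | hW1ne
      · -- u' > 0 everywhere on Icc
        have hpos : ∀ x ∈ Set.Icc c 2, 0 < u' x := by
          intro x hx
          by_contra hcon
          push_neg at hcon
          have : x ∈ W1 := ⟨hx, hcon⟩
          rw [hW1e] at this
          exact this
        have hsub2 : Set.Icc c 2 ∩ {x | |u x| < θ₁} ∩ {x | θ₂ ≤ |u' x|}
            ⊆ Set.Icc c 2 ∩ {x | |u x| < θ₁} ∩ {x | θ₂ ≤ u' x} := by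
          intro x hx
          refine ⟨hx.1, ?_⟩
          have := hpos x hx.1.1
          have h2 : θ₂ ≤ |u' x| := hx.2
          rw [abs_of_pos this] at h2
          exact h2
        refine le_trans (measure_mono hsub2) (le_trans
          (small_of_deriv u u' hdu hcu' c 2 θ₁ θ₂ hθ₂
            (fun x hx => (hpos x (Set.Ioo_subset_Icc_self hx)).le)) ?_)
        exact self_le_add_right _ _
      · set ρ := sSup W1 with hρdef
        have hρ : ρ ∈ W1 := hW1c.sSup_mem hW1ne
        have hsign1 : ∀ x ∈ Set.Icc c ρ, u' x ≤ 0 := by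
          intro x hx
          by_contra hcon
          push_neg at hcon
          have := hsignu' x ρ hx.1 hx.2 hcon
          have h9 : u' ρ ≤ 0 := hρ.2
          linarith
        have hsign2 : ∀ x ∈ Set.Icc c 2, ρ < x → 0 < u' x := by
          intro x hx hρx
          by_contra hcon
          push_neg at hcon
          have : x ∈ W1 := ⟨hx, hcon⟩
          exact absurd (le_csSup hW1c.bddAbove this) (not_le.2 hρx)
        have hcover : Set.Icc c 2 ∩ {x | |u x| < θ₁} ∩ {x | θ₂ ≤ |u' x|} ⊆
            (Set.Icc c ρ ∩ {x | |(-u) x| < θ₁} ∩ {x | θ₂ ≤ (-u') x})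
              ∪ (Set.Icc ρ 2 ∩ {x | |u x| < θ₁} ∩ {x | θ₂ ≤ u' x}) := by
          rintro x ⟨⟨hxI, hxu⟩, hxu'⟩
          rcases le_or_gt x ρ with hxρ | hxρ
          · left
            have hs := hsign1 x ⟨hxI.1, hxρ⟩
            refine ⟨⟨⟨hxI.1, hxρ⟩, ?_⟩, ?_⟩
            · show |(-u) x| < θ₁
              simpa [abs_neg] using hxu
            · show θ₂ ≤ (-u') x
              have h2 : |u' x| = -(u' x) := abs_of_nonpos hs
              have hxu2 : θ₂ ≤ |u' x| := hxu'
              simp only [Pi.neg_apply]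
              rw [h2] at hxu2
              linarith
          · right
            have hs := hsign2 x hxI hxρ
            refine ⟨⟨⟨hxρ.le, hxI.2⟩, hxu⟩, ?_⟩
            show θ₂ ≤ u' x
            have hxu2 : θ₂ ≤ |u' x| := hxu'
            rwa [abs_of_pos hs] at hxu2
        refine le_trans (measure_mono hcover) (le_trans (measure_union_le _ _)
          (add_le_add ?_ ?_))
        · have hdnu : ∀ x, HasDerivAt (-u) ((-u') x) x := by
            intro x
            simpa using (hdu x).neg
          exact small_of_deriv (-u) (-u') hdnu hcu'.neg c ρ θ₁ θ₂ hθ₂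
            (fun x hx => by
              simp only [Pi.neg_apply]
              linarith [hsign1 x (Set.Ioo_subset_Icc_self hx)])
        · exact small_of_deriv u u' hdu hcu' ρ 2 θ₁ θ₂ hθ₂
            (fun x hx => (hsign2 x ⟨le_trans hρ.1.1 hx.1.le, hx.2.le⟩ hx.1).le)
    exact add_le_add hXbound L3
  -- Level 1 : structure of the sign of u
  have hmid : (∀ x ∈ Set.Icc c 2, 0 < u x) ∨
      (∃ σ₁ σ₂, c ≤ σ₁ ∧ σ₁ ≤ σ₂ ∧ σ₂ ≤ 2 ∧
        (∀ x ∈ Set.Icc c 2, x < σ₁ → 0 < u x) ∧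
        (∀ x ∈ Set.Icc σ₁ σ₂, u x ≤ 0) ∧
        (∀ x ∈ Set.Icc c 2, σ₂ < x → 0 < u x)) := by
    set W2 := Set.Icc c 2 ∩ {x | u x ≤ 0} with hW2def
    have hW2c : IsCompact W2 :=
      isCompact_Icc.inter_right (isClosed_le hcu continuous_const)
    rcases W2.eq_empty_or_nonempty with hW2e | hW2ne
    · left
      intro x hx
      by_contra hcon
      push_neg at hcon
      have : x ∈ W2 := ⟨hx, hcon⟩
      rw [hW2e] at this
      exact this
    · right
      set σ₁ := sInf W2 with hσ₁def
      set σ₂ := sSup W2 with hσ₂def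
      have hσ₁ : σ₁ ∈ W2 := hW2c.sInf_mem hW2ne
      have hσ₂ : σ₂ ∈ W2 := hW2c.sSup_mem hW2ne
      refine ⟨σ₁, σ₂, hσ₁.1.1, csInf_le_csSup hW2ne hW2c.bddBelow hW2c.bddAbove,
        hσ₂.1.2, ?_, ?_, ?_⟩
      · intro x hx hlt
        by_contra hcon
        push_neg at hcon
        exact absurd (csInf_le hW2c.bddBelow ⟨hx, hcon⟩) (not_le.2 hlt)
      · -- middle nonpositivity, via monotonicity pieces
        set W1 := Set.Icc c 2 ∩ {x | u' x ≤ 0} with hW1def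
        have hW1c : IsCompact W1 :=
          isCompact_Icc.inter_right (isClosed_le hcu' continuous_const)
        rcases W1.eq_empty_or_nonempty with hW1e | hW1ne
        · have hpos : ∀ x ∈ Set.Icc c 2, 0 ≤ u' x := by
            intro x hx
            by_contra hcon
            push_neg at hcon
            have : x ∈ W1 := ⟨hx, hcon.le⟩
            rw [hW1e] at this
            exact this
          have hmono : MonotoneOn u (Set.Icc c 2) := by
            refine monotoneOn_of_deriv_nonneg (convex_Icc _ _) hcu.continuousOn
              (fun x _ => (hdu x).differentiableAt.differentiableWithinAt) ?_
            intro x hx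
            rw [interior_Icc] at hx
            rw [(hdu x).deriv]
            exact hpos x (Set.Ioo_subset_Icc_self hx)
          intro x hx
          have hxm : x ∈ Set.Icc c 2 :=
            ⟨le_trans hσ₁.1.1 hx.1, le_trans hx.2 hσ₂.1.2⟩
          calc u x ≤ u σ₂ := hmono hxm hσ₂.1 hx.2
            _ ≤ 0 := hσ₂.2
        · set ρ := sSup W1 with hρdef
          have hρ : ρ ∈ W1 := hW1c.sSup_mem hW1ne
          have hsign1 : ∀ x ∈ Set.Icc c ρ, u' x ≤ 0 := by
            intro x hx
            by_contra hcon
            push_neg at hcon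
            have := hsignu' x ρ hx.1 hx.2 hcon
            have h9 : u' ρ ≤ 0 := hρ.2
            linarith
          have hsign2 : ∀ x ∈ Set.Icc c 2, ρ < x → 0 ≤ u' x := by
            intro x hx hρx
            by_contra hcon
            push_neg at hcon
            have : x ∈ W1 := ⟨hx, hcon.le⟩
            exact absurd (le_csSup hW1c.bddAbove this) (not_le.2 hρx)
          have hanti : AntitoneOn u (Set.Icc c ρ) := by
            refine antitoneOn_of_deriv_nonpos (convex_Icc _ _) (hcu.continuousOn)
              (fun x _ => (hdu x).differentiableAt.differentiableWithinAt) ?_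
            intro x hx
            rw [interior_Icc] at hx
            rw [(hdu x).deriv]
            exact hsign1 x (Set.Ioo_subset_Icc_self hx)
          have hmonoρ : MonotoneOn u (Set.Icc ρ 2) := by
            refine monotoneOn_of_deriv_nonneg (convex_Icc _ _) (hcu.continuousOn)
              (fun x _ => (hdu x).differentiableAt.differentiableWithinAt) ?_
            intro x hx
            rw [interior_Icc] at hx
            rw [(hdu x).deriv]
            exact hsign2 x ⟨le_trans hρ.1.1 hx.1.le, hx.2.le⟩ hx.1
          intro x hx
          rcases le_total x ρ with hxρ | hxρ
          · have hσ₁m : σ₁ ∈ Set.Icc c ρ := ⟨hσ₁.1.1, le_trans hx.1 hxρ⟩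
            have hxm : x ∈ Set.Icc c ρ := ⟨le_trans hσ₁.1.1 hx.1, hxρ⟩
            calc u x ≤ u σ₁ := hanti hσ₁m hxm hx.1
              _ ≤ 0 := hσ₁.2
          · have hσ₂m : σ₂ ∈ Set.Icc ρ 2 := ⟨le_trans hxρ hx.2, hσ₂.1.2⟩
            have hxm : x ∈ Set.Icc ρ 2 := ⟨hxρ, le_trans hx.2 hσ₂.1.2⟩
            calc u x ≤ u σ₂ := hmonoρ hxm hσ₂m hx.2
              _ ≤ 0 := hσ₂.2
      · intro x hx hgt
        by_contra hcon
        push_neg at hcon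
        exact absurd (le_csSup hW2c.bddAbove ⟨hx, hcon⟩) (not_le.2 hgt)
  -- assemble level 1
  have hsplit0 : Set.Icc c 2 ∩ {x | |h x| < δ} ⊆
      (Set.Icc c 2 ∩ {x | |h x| < δ} ∩ {x | θ₁ ≤ |h' x|})
        ∪ (Set.Icc c 2 ∩ {x | |u x| < θ₁}) := by
    intro x hx
    rcases le_or_gt θ₁ |h' x| with hca | hca
    · exact Or.inl ⟨hx, hca⟩
    · exact Or.inr ⟨hx.1, lt_of_le_of_lt (habs x hx.1) hca⟩
  have hT : volume (Set.Icc c 2 ∩ {x | |h x| < δ} ∩ {x | θ₁ ≤ |h' x|})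
      ≤ ENNReal.ofReal (2*δ/θ₁) + ENNReal.ofReal (2*δ/θ₁) + ENNReal.ofReal (2*δ/θ₁) := by
    have hup : ∀ x ∈ Set.Icc c 2, 0 < u x → 0 < h' x := by
      intro x hx hu0
      rw [hid1 x]
      have hx0 : (0:ℝ) < x := lt_trans one_pos (lt_of_lt_of_le hc hx.1)
      exact mul_pos (pow_pos hx0 _) hu0
    have hdown : ∀ x ∈ Set.Icc c 2, u x ≤ 0 → h' x ≤ 0 := by
      intro x hx hu0
      rw [hid1 x]
      have hx0 : (0:ℝ) < x := lt_trans one_pos (lt_of_lt_of_le hc hx.1)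
      exact mul_nonpos_of_nonneg_of_nonpos (pow_pos hx0 _).le hu0
    rcases hmid with hall | ⟨σ₁, σ₂, hcσ₁, hσ₁₂, hσ₂2, hA, hB, hC⟩
    · -- single monotone piece
      have hsub2 : Set.Icc c 2 ∩ {x | |h x| < δ} ∩ {x | θ₁ ≤ |h' x|}
          ⊆ Set.Icc c 2 ∩ {x | |h x| < δ} ∩ {x | θ₁ ≤ h' x} := by
        intro x hx
        refine ⟨hx.1, ?_⟩
        have h2 : θ₁ ≤ |h' x| := hx.2
        rw [abs_of_pos (hup x hx.1.1 (hall x hx.1.1))] at h2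
        exact h2
      refine le_trans (measure_mono hsub2) (le_trans
        (small_of_deriv h h' hdh hch' c 2 δ θ₁ hθ₁
          (fun x hx => (hup x (Set.Ioo_subset_Icc_self hx)
            (hall x (Set.Ioo_subset_Icc_self hx))).le)) ?_)
      calc ENNReal.ofReal (2*δ/θ₁)
          ≤ ENNReal.ofReal (2*δ/θ₁) + ENNReal.ofReal (2*δ/θ₁) := self_le_add_right _ _
        _ ≤ ENNReal.ofReal (2*δ/θ₁) + ENNReal.ofReal (2*δ/θ₁) + ENNReal.ofReal (2*δ/θ₁) :=
          self_le_add_right _ _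
    · have hcover : Set.Icc c 2 ∩ {x | |h x| < δ} ∩ {x | θ₁ ≤ |h' x|} ⊆
          (Set.Icc c σ₁ ∩ {x | |h x| < δ} ∩ {x | θ₁ ≤ h' x})
            ∪ ((Set.Icc σ₁ σ₂ ∩ {x | |(-h) x| < δ} ∩ {x | θ₁ ≤ (-h') x})
              ∪ (Set.Icc σ₂ 2 ∩ {x | |h x| < δ} ∩ {x | θ₁ ≤ h' x})) := by
        rintro x ⟨⟨hxI, hxh⟩, hxh'⟩
        rcases lt_or_ge x σ₁ with hlt | hge
        · left
          have := hup x hxI (hA x hxI hlt)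
          refine ⟨⟨⟨hxI.1, hlt.le⟩, hxh⟩, ?_⟩
          show θ₁ ≤ h' x
          have hxh2 : θ₁ ≤ |h' x| := hxh'
          rwa [abs_of_pos this] at hxh2
        · right
          rcases le_or_gt x σ₂ with hle | hgt
          · left
            have hs := hdown x hxI (hB x ⟨hge, hle⟩)
            refine ⟨⟨⟨hge, hle⟩, ?_⟩, ?_⟩
            · show |(-h) x| < δ
              simpa [abs_neg] using hxh
            · show θ₁ ≤ (-h') x
              have h2 : |h' x| = -(h' x) := abs_of_nonpos hs
              have hxh2 : θ₁ ≤ |h' x| := hxh'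
              simp only [Pi.neg_apply]
              rw [h2] at hxh2
              linarith
          · right
            have := hup x hxI (hC x hxI hgt)
            refine ⟨⟨⟨hgt.le, hxI.2⟩, hxh⟩, ?_⟩
            show θ₁ ≤ h' x
            have hxh2 : θ₁ ≤ |h' x| := hxh'
            rwa [abs_of_pos this] at hxh2
      refine le_trans (measure_mono hcover) (le_trans (measure_union_le _ _) ?_)
      rw [add_assoc]
      refine add_le_add ?_ (le_trans (measure_union_le _ _) (add_le_add ?_ ?_))
      · exact small_of_deriv h h' hdh hch' c σ₁ δ θ₁ hθ₁
          (fun x hx => (hup x ⟨hx.1.le, le_trans hx.2.le (le_trans hσ₁₂ hσ₂2)⟩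
            (hA x ⟨hx.1.le, le_trans hx.2.le (le_trans hσ₁₂ hσ₂2)⟩ hx.2)).le)
      · have hdnh : ∀ x, HasDerivAt (-h) ((-h') x) x := by
          intro x
          simpa using (hdh x).neg
        exact small_of_deriv (-h) (-h') hdnh hch'.neg σ₁ σ₂ δ θ₁ hθ₁
          (fun x hx => by
            simp only [Pi.neg_apply]
            have := hdown x ⟨le_trans hcσ₁ hx.1.le, le_trans hx.2.le hσ₂2⟩
              (hB x ⟨hx.1.le, hx.2.le⟩)
            linarith)
      · exact small_of_deriv h h' hdh hch' σ₂ 2 δ θ₁ hθ₁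
          (fun x hx => (hup x ⟨le_trans hcσ₁ (le_trans hσ₁₂ hx.1.le), hx.2.le⟩
            (hC x ⟨le_trans hcσ₁ (le_trans hσ₁₂ hx.1.le), hx.2.le⟩ hx.1)).le)
  calc volume (Set.Icc c 2 ∩ {x | |x ^ a - x ^ b - x ^ e + 1| < δ})
      = volume (Set.Icc c 2 ∩ {x | |h x| < δ}) := rfl
    _ ≤ volume ((Set.Icc c 2 ∩ {x | |h x| < δ} ∩ {x | θ₁ ≤ |h' x|})
        ∪ (Set.Icc c 2 ∩ {x | |u x| < θ₁})) := measure_mono hsplit0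
    _ ≤ volume (Set.Icc c 2 ∩ {x | |h x| < δ} ∩ {x | θ₁ ≤ |h' x|})
        + volume (Set.Icc c 2 ∩ {x | |u x| < θ₁}) := measure_union_le _ _
    _ ≤ _ := add_le_add hT L2


lemma final_step (c CC D : ℝ) (hc : 1 < c) (K X n7 : ℕ)
    (hD : 0 ≤ D) (hDK : D * c^K ≤ CC) (hexp : n7 ≤ X + K) :
    D * ((c:ℝ)^X)⁻¹ ≤ CC * ((c:ℝ)^n7)⁻¹ := by
  have hc0 : (0:ℝ) < c := by linarith
  have hcX : (0:ℝ) < c^X := pow_pos hc0 X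
  have hcn : (0:ℝ) < c^n7 := pow_pos hc0 n7
  rw [← div_eq_mul_inv, ← div_eq_mul_inv, div_le_div_iff₀ hcX hcn]
  have h1 : (c:ℝ)^n7 ≤ c^(X+K) := pow_le_pow_right₀ hc.le hexp
  calc D * c^n7 ≤ D * c^(X+K) := mul_le_mul_of_nonneg_left h1 hD
    _ = (D * c^K) * c^X := by rw [pow_add]; ring
    _ ≤ CC * c^X := mul_le_mul_of_nonneg_right hDK hcX.le

set_option maxHeartbeats 1000000 in
lemma tuple_bound (c : ℝ) (hc : 1 < c) (hc2 : c < 2) (G L : ℕ)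
    (hG : (8:ℝ) < c ^ G) (hL : 2 / (c-1) < c ^ L)
    (p q r s : ℕ) (hrp : r < p) (hsr : s ≤ r) (hqs : q < s) :
    volume (Set.Ioo c 2 ∩ {x | |x^p + x^q - x^r - x^s| < 2}) ≤
      ENNReal.ofReal ((16 + 8*c^G/(c-1) + 6/(c-1) + 20*c^(2*(G+L))) * ((c:ℝ)^(p/7))⁻¹) := by
  have hc0 : (0:ℝ) < c := by linarith
  have hc1 : (0:ℝ) < c - 1 := by linarith
  have hp1 : 1 ≤ p := by omega
  set CC := 16 + 8*c^G/(c-1) + 6/(c-1) + 20*c^(2*(G+L)) with hCCdef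
  have ht2 : (0:ℝ) ≤ 8*c^G/(c-1) := by positivity
  have ht3 : (0:ℝ) ≤ 6/(c-1) := by positivity
  have ht4 : (0:ℝ) ≤ 20*c^(2*(G+L)) := by positivity
  have h16 : (16:ℝ) ≤ CC := by rw [hCCdef]; linarith
  have hC2 : 8*c^G/(c-1) ≤ CC := by rw [hCCdef]; linarith
  have hC3 : 6/(c-1) ≤ CC := by rw [hCCdef]; linarith
  have hC4 : 20*c^(2*(G+L)) ≤ CC := by rw [hCCdef]; linarith
  have hdet2 : 2 < (c-1) * c^L := by
    rw [div_lt_iff₀ hc1] at hL; linarith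
  by_cases hB : r + G ≤ p
  · -- Case B: all lower exponents at distance ≥ G from p; f is monotone
    set f : ℝ → ℝ := fun x => x^p + x^q - x^r - x^s with hfdef
    set f' : ℝ → ℝ := fun x =>
      (p:ℝ)*x^(p-1) + (q:ℝ)*x^(q-1) - (r:ℝ)*x^(r-1) - (s:ℝ)*x^(s-1) with hf'def
    have hdf : ∀ x, HasDerivAt f (f' x) x := fun x =>
      (((hasDerivAt_pow p x).add (hasDerivAt_pow q x)).sub (hasDerivAt_pow r x)).sub
        (hasDerivAt_pow s x)
    have hcf' : Continuous f' := by simp only [hf'def]; fun_prop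
    have hlow : ∀ x ∈ Set.Icc c 2, c^(p-1)/2 ≤ f' x := by
      intro x hx
      have hx1 : (1:ℝ) ≤ x := le_trans hc.le hx.1
      have hcx : c ≤ x := hx.1
      have key : ∀ t : ℕ, t + G ≤ p → (t:ℝ) * x^(t-1) ≤ (p:ℝ)*x^(p-1)/8 := by
        intro t ht
        have h1 : x^(t-1) * 8 ≤ x^(p-1) := by
          have e1 : x^(t-1) * x^G = x^(t-1+G) := (pow_add x _ _).symm
          have h2 : (8:ℝ) ≤ x^G := le_trans hG.le (pow_le_pow_left₀ hc0.le hcx G)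
          have h3 : x^(t-1+G) ≤ x^(p-1) := pow_le_pow_right₀ hx1 (by omega)
          have h4 : x^(t-1) * 8 ≤ x^(t-1) * x^G :=
            mul_le_mul_of_nonneg_left h2 (by positivity)
          calc x^(t-1)*8 ≤ x^(t-1)*x^G := h4
            _ = x^(t-1+G) := e1
            _ ≤ x^(p-1) := h3
        have h5 : (t:ℝ) ≤ (p:ℝ) := by exact_mod_cast (by omega : t ≤ p)
        have h6 : (0:ℝ) ≤ x^(t-1) := by positivity
        have h7 : (t:ℝ)*x^(t-1) ≤ (p:ℝ)*x^(t-1) := mul_le_mul_of_nonneg_right h5 h6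
        have h8 : (p:ℝ)*x^(t-1) ≤ (p:ℝ)*(x^(p-1)/8) :=
          mul_le_mul_of_nonneg_left (by linarith) (by positivity)
        calc (t:ℝ)*x^(t-1) ≤ (p:ℝ)*x^(t-1) := h7
          _ ≤ (p:ℝ)*(x^(p-1)/8) := h8
          _ = (p:ℝ)*x^(p-1)/8 := by ring
      have hr' : (r:ℝ)*x^(r-1) ≤ (p:ℝ)*x^(p-1)/8 := key r hB
      have hs' : (s:ℝ)*x^(s-1) ≤ (p:ℝ)*x^(p-1)/8 := key s (by omega)
      have hq' : (0:ℝ) ≤ (q:ℝ)*x^(q-1) := by positivity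
      have hpx : c^(p-1) ≤ x^(p-1) := pow_le_pow_left₀ hc0.le hcx _
      have hp1' : (1:ℝ) ≤ (p:ℝ) := by exact_mod_cast hp1
      have hxp0 : (0:ℝ) ≤ x^(p-1) := by positivity
      have hpp : (1:ℝ)*x^(p-1) ≤ (p:ℝ)*x^(p-1) := mul_le_mul_of_nonneg_right hp1' hxp0
      simp only [hf'def]
      nlinarith
    have hsub : Set.Ioo c 2 ∩ {x | |x^p + x^q - x^r - x^s| < 2} ⊆
        Set.Icc c 2 ∩ {x | |f x| < 2} ∩ {x | c^(p-1)/2 ≤ f' x} := by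
      intro x hx
      exact ⟨⟨Set.Ioo_subset_Icc_self hx.1, hx.2⟩, hlow x (Set.Ioo_subset_Icc_self hx.1)⟩
    refine le_trans (measure_mono hsub) (le_trans
      (small_of_deriv f f' hdf hcf' c 2 2 (c^(p-1)/2) (by positivity)
        (fun x hx => le_trans (by positivity) (hlow x (Set.Ioo_subset_Icc_self hx)))) ?_)
    apply ENNReal.ofReal_le_ofReal
    have e1 : 2*2/((c:ℝ)^(p-1)/2) = (8*c) * ((c:ℝ)^p)⁻¹ := by
      have e0 : (c:ℝ)^p = c^(p-1) * c := by
        rw [← pow_succ]; congr 1; omega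
      rw [e0]
      have hne : (c:ℝ)^(p-1) ≠ 0 := by positivity
      field_simp
      ring
    rw [e1]
    have hinv : (0:ℝ) ≤ ((c:ℝ)^p)⁻¹ := by positivity
    calc (8*c) * ((c:ℝ)^p)⁻¹ ≤ 16 * ((c:ℝ)^p)⁻¹ := by nlinarith
      _ ≤ CC * ((c:ℝ)^(p/7))⁻¹ :=
        final_step c CC 16 hc 0 p (p/7) (by norm_num) (by simpa using h16) (by omega)
  · push_neg at hB
    -- common: peel off x^q
    have hidf : ∀ x:ℝ, x^q * (x^(p-q) - x^(r-q) - x^(s-q) + 1) = x^p + x^q - x^r - x^s := by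
      intro x
      have e1 : x^q * x^(p-q) = x^p := by rw [← pow_add]; congr 1; omega
      have e2 : x^q * x^(r-q) = x^r := by rw [← pow_add]; congr 1; omega
      have e3 : x^q * x^(s-q) = x^s := by rw [← pow_add]; congr 1; omega
      linear_combination e1 - e2 - e3
    have hEh : Set.Ioo c 2 ∩ {x | |x^p + x^q - x^r - x^s| < 2} ⊆
        Set.Icc c 2 ∩ {x | |x^(p-q) - x^(r-q) - x^(s-q) + 1| < 2*((c:ℝ)^q)⁻¹} := by
      intro x hx
      have hxI := Set.Ioo_subset_Icc_self hx.1
      have hcx : c ≤ x := hxI.1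
      have hxq : (c:ℝ)^q ≤ x^q := pow_le_pow_left₀ hc0.le hcx q
      have hcq : (0:ℝ) < c^q := pow_pos hc0 q
      have hx0 : (0:ℝ) < x := lt_of_lt_of_le hc0 hcx
      have hxq0 : (0:ℝ) < x^q := pow_pos hx0 q
      refine ⟨hxI, ?_⟩
      show |x^(p-q) - x^(r-q) - x^(s-q) + 1| < 2*((c:ℝ)^q)⁻¹
      have h2 : |x^p + x^q - x^r - x^s| < 2 := hx.2
      rw [← hidf x, abs_mul, abs_of_pos hxq0] at h2
      have h3 : |x^(p-q) - x^(r-q) - x^(s-q) + 1| * c^q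
          ≤ x^q * |x^(p-q) - x^(r-q) - x^(s-q) + 1| := by
        rw [mul_comm (x^q)]
        exact mul_le_mul_of_nonneg_left hxq (abs_nonneg _)
      have h4 : |x^(p-q) - x^(r-q) - x^(s-q) + 1| * c^q < 2 := lt_of_le_of_lt h3 h2
      rw [← lt_div_iff₀ hcq] at h4
      rw [mul_comm 2 ((c:ℝ)^q)⁻¹, ← div_eq_inv_mul]
      exact h4
    by_cases h2s : 2*s ≤ p + q
    · by_cases hLrs : s + L ≤ r
      · -- Case C : h is monotone with large derivative
        set h : ℝ → ℝ := fun x => x^(p-q) - x^(r-q) - x^(s-q) + 1 with hhdef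
        set h' : ℝ → ℝ := fun x => ((p-q:ℕ):ℝ)*x^(p-q-1) - ((r-q:ℕ):ℝ)*x^(r-q-1)
          - ((s-q:ℕ):ℝ)*x^(s-q-1) with hh'def
        have hdh : ∀ x, HasDerivAt h (h' x) x := fun x =>
          (((hasDerivAt_pow (p-q) x).sub (hasDerivAt_pow (r-q) x)).sub
            (hasDerivAt_pow (s-q) x)).add_const 1
        have hch' : Continuous h' := by simp only [hh'def]; fun_prop
        have hθCpos : (0:ℝ) < (c-1)*c^(r-s)/2 := div_pos (mul_pos hc1 (pow_pos hc0 _)) two_pos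
        have hlowh : ∀ x ∈ Set.Icc c 2, (c-1)*c^(r-s)/2 ≤ h' x := by
          intro x hx
          have hx1 : (1:ℝ) ≤ x := le_trans hc.le hx.1
          have hcx : c ≤ x := hx.1
          have hxpr : c ≤ x^(p-r) := by
            calc c ≤ x := hcx
              _ = x^1 := (pow_one x).symm
              _ ≤ x^(p-r) := pow_le_pow_right₀ hx1 (by omega)
          have hYc : (c:ℝ)^(r-s) ≤ x^(r-s) := pow_le_pow_left₀ hc0.le hcx _
          have hcL : (c:ℝ)^L ≤ c^(r-s) := pow_le_pow_right₀ hc.le (by omega)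
          have hX2 : 2 < (c-1)*c^(r-s) := by
            have h99 := mul_le_mul_of_nonneg_left hcL hc1.le
            linarith
          have hpq1 : (1:ℝ) ≤ ((p-q:ℕ):ℝ) := by exact_mod_cast (by omega : 1 ≤ p - q)
          have hrqle : ((r-q:ℕ):ℝ) ≤ ((p-q:ℕ):ℝ) := by
            exact_mod_cast (by omega : r - q ≤ p - q)
          have hsqle : ((s-q:ℕ):ℝ) ≤ ((p-q:ℕ):ℝ) := by
            exact_mod_cast (by omega : s - q ≤ p - q)
          have hid : h' x = x^(s-q-1) *
              (((p-q:ℕ):ℝ)*x^(p-s) - ((r-q:ℕ):ℝ)*x^(r-s) - ((s-q:ℕ):ℝ)) := by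
            have p1 : x^(s-q-1) * x^(p-s) = x^(p-q-1) := by rw [← pow_add]; congr 1; omega
            have p2 : x^(s-q-1) * x^(r-s) = x^(r-q-1) := by rw [← pow_add]; congr 1; omega
            simp only [hh'def]
            linear_combination (-((p-q:ℕ):ℝ))*p1 + ((r-q:ℕ):ℝ)*p2
          have e4 : x^(r-s) * x^(p-r) = x^(p-s) := by rw [← pow_add]; congr 1; omega
          have hxrs0 : (0:ℝ) ≤ x^(r-s) := by positivity
          have step1 : ((p-q:ℕ):ℝ)*(c-1) ≤ ((p-q:ℕ):ℝ)*x^(p-r) - ((r-q:ℕ):ℝ) := by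
            have h9 := mul_le_mul_of_nonneg_left hxpr (le_trans zero_le_one hpq1)
            nlinarith
          have step2 : x^(r-s)*(((p-q:ℕ):ℝ)*(c-1)) - ((s-q:ℕ):ℝ)
              ≤ ((p-q:ℕ):ℝ)*x^(p-s) - ((r-q:ℕ):ℝ)*x^(r-s) - ((s-q:ℕ):ℝ) := by
            have h9 := mul_le_mul_of_nonneg_left step1 hxrs0
            nlinarith [e4]
          have step3 : (c:ℝ)^(r-s)*(((p-q:ℕ):ℝ)*(c-1))
              ≤ x^(r-s)*(((p-q:ℕ):ℝ)*(c-1)) := by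
            have h9 : (0:ℝ) ≤ ((p-q:ℕ):ℝ)*(c-1) :=
              mul_nonneg (by linarith) hc1.le
            exact mul_le_mul_of_nonneg_right hYc h9
          have step5 : (c-1)*c^(r-s)/2
              ≤ ((p-q:ℕ):ℝ)*x^(p-s) - ((r-q:ℕ):ℝ)*x^(r-s) - ((s-q:ℕ):ℝ) := by
            have hfac : (1:ℝ)*((c-1)*c^(r-s) - 1) ≤ ((p-q:ℕ):ℝ)*((c-1)*c^(r-s) - 1) :=
              mul_le_mul_of_nonneg_right hpq1 (by linarith)
            nlinarith [step2, step3, hsqle, hX2, hfac]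
          rw [hid]
          have hxsq1 : (1:ℝ) ≤ x^(s-q-1) := by
            calc (1:ℝ) = 1^(s-q-1) := (one_pow _).symm
              _ ≤ x^(s-q-1) := pow_le_pow_left₀ (by norm_num) hx1 _
          have hU0 : (0:ℝ) ≤ ((p-q:ℕ):ℝ)*x^(p-s) - ((r-q:ℕ):ℝ)*x^(r-s) - ((s-q:ℕ):ℝ) :=
            le_trans hθCpos.le step5
          have h10 := le_mul_of_one_le_left hU0 hxsq1
          linarith
        have hsubC : Set.Ioo c 2 ∩ {x | |x^p + x^q - x^r - x^s| < 2} ⊆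
            Set.Icc c 2 ∩ {x | |h x| < 2*((c:ℝ)^q)⁻¹} ∩ {x | (c-1)*c^(r-s)/2 ≤ h' x} := by
          intro x hx
          exact ⟨hEh hx, hlowh x (hEh hx).1⟩
        refine le_trans (measure_mono hsubC) (le_trans
          (small_of_deriv h h' hdh hch' c 2 (2*((c:ℝ)^q)⁻¹) ((c-1)*c^(r-s)/2) hθCpos
            (fun x hx => le_trans hθCpos.le (hlowh x (Set.Ioo_subset_Icc_self hx)))) ?_)
        apply ENNReal.ofReal_le_ofReal
        have e5 : 2*(2*((c:ℝ)^q)⁻¹)/((c-1)*c^(r-s)/2)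
            = (8/(c-1)) * ((c:ℝ)^(q+(r-s)))⁻¹ := by
          rw [pow_add]
          have h1 : (c:ℝ)^q ≠ 0 := ne_of_gt (pow_pos hc0 q)
          have h2 : (c:ℝ)^(r-s) ≠ 0 := ne_of_gt (pow_pos hc0 _)
          have h3 : c - 1 ≠ 0 := ne_of_gt hc1
          field_simp
          ring
        rw [e5]
        exact final_step c CC (8/(c-1)) hc G (q+(r-s)) (p/7) (by positivity)
          (le_trans (le_of_eq (by ring)) hC2)
          (by omega)
      · -- chain case 1
        push_neg at hLrs
        have hchain := chain c hc (p-q) (r-q) (s-q) (by omega) (by omega) (by omega)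
          (2*((c:ℝ)^q)⁻¹) ((((c:ℝ)^(q/3))⁻¹)^2) (((c:ℝ)^(q/3))⁻¹)
          (by positivity) (by positivity)
        refine le_trans (le_trans (measure_mono hEh) hchain) ?_
        set w := (c:ℝ)^(q/3) with hwdef
        have hw0 : (0:ℝ) < w := by positivity
        have hw1 : (1:ℝ) ≤ w := by
          rw [hwdef]
          calc (1:ℝ) = 1^(q/3) := (one_pow _).symm
            _ ≤ c^(q/3) := pow_le_pow_left₀ (by norm_num) hc.le _
        have hcq0 : (0:ℝ) < (c:ℝ)^q := by positivity
        have hw3 : w^3 ≤ (c:ℝ)^q := by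
          rw [hwdef, ← pow_mul]
          exact pow_le_pow_right₀ hc.le (by omega)
        have hterm1 : 2*(2*((c:ℝ)^q)⁻¹)/(w⁻¹^2) ≤ 4*w⁻¹ := by
          have e6 : 2*(2*((c:ℝ)^q)⁻¹)/(w⁻¹^2) = 4*w^2/((c:ℝ)^q) := by
            rw [inv_pow, div_eq_mul_inv, inv_inv, div_eq_mul_inv]
            ring
          rw [e6, div_le_iff₀ hcq0]
          have hinv : w⁻¹ * w = 1 := inv_mul_cancel₀ (ne_of_gt hw0)
          nlinarith
        have hterm2 : 2*(w⁻¹^2)/(w⁻¹) ≤ 2*w⁻¹ := by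
          have hinv : w⁻¹ * w = 1 := inv_mul_cancel₀ (ne_of_gt hw0)
          have heq : 2*(w⁻¹^2)/(w⁻¹) = 2*w⁻¹ := by
            rw [div_eq_mul_inv, inv_inv]
            linear_combination (2*w⁻¹) * hinv
          linarith
        have hbig : ENNReal.ofReal (2*(2*((c:ℝ)^q)⁻¹)/(w⁻¹^2))
              + ENNReal.ofReal (2*(2*((c:ℝ)^q)⁻¹)/(w⁻¹^2))
              + ENNReal.ofReal (2*(2*((c:ℝ)^q)⁻¹)/(w⁻¹^2))
              + (ENNReal.ofReal (2*(w⁻¹^2)/(w⁻¹)) + ENNReal.ofReal (2*(w⁻¹^2)/(w⁻¹))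
                + ENNReal.ofReal (4*(w⁻¹)))
            ≤ ENNReal.ofReal (20*w⁻¹) := by
          have hw4 : (0:ℝ) ≤ 4*w⁻¹ := by positivity
          have hw2 : (0:ℝ) ≤ 2*w⁻¹ := by positivity
          calc _ ≤ ENNReal.ofReal (4*w⁻¹) + ENNReal.ofReal (4*w⁻¹) + ENNReal.ofReal (4*w⁻¹)
              + (ENNReal.ofReal (2*w⁻¹) + ENNReal.ofReal (2*w⁻¹) + ENNReal.ofReal (4*w⁻¹)) := by
                gcongr <;> first
                  | exact ENNReal.ofReal_le_ofReal hterm1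
                  | exact ENNReal.ofReal_le_ofReal hterm2
                  | exact le_refl _
            _ = ENNReal.ofReal (20*w⁻¹) := by
                have e20 : (20:ℝ)*w⁻¹ = 4*w⁻¹+4*w⁻¹+4*w⁻¹+(2*w⁻¹+2*w⁻¹+4*w⁻¹) := by ring
                rw [e20]
                rw [ENNReal.ofReal_add (by linarith) (by linarith)]
                rw [ENNReal.ofReal_add (by linarith) (by linarith)]
                rw [ENNReal.ofReal_add (by linarith) (by linarith)]
                rw [ENNReal.ofReal_add (by linarith) (by linarith)]
                rw [ENNReal.ofReal_add (by linarith) (by linarith)]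
        refine le_trans hbig (ENNReal.ofReal_le_ofReal ?_)
        rw [hwdef]
        exact final_step c CC 20 hc (2*(G+L)) (q/3) (p/7) (by norm_num) hC4 (by omega)
    · push_neg at h2s
      by_cases hq2 : 2*q ≤ p
      · -- Case D : middle peel, ψ monotone
        set ψ : ℝ → ℝ := fun x => x^(p-s) - x^(r-s) - 1 with hψdef
        set ψ' : ℝ → ℝ := fun x => ((p-s:ℕ):ℝ)*x^(p-s-1) - ((r-s:ℕ):ℝ)*x^(r-s-1) with hψ'def
        have hdψ : ∀ x, HasDerivAt ψ (ψ' x) x := fun x =>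
          ((hasDerivAt_pow (p-s) x).sub (hasDerivAt_pow (r-s) x)).sub_const 1
        have hcψ' : Continuous ψ' := by simp only [hψ'def]; fun_prop
        have hψlow : ∀ x ∈ Set.Icc c 2, c - 1 ≤ ψ' x := by
          intro x hx
          have hx1 : (1:ℝ) ≤ x := le_trans hc.le hx.1
          have hcx : c ≤ x := hx.1
          have hps1 : (1:ℝ) ≤ ((p-s:ℕ):ℝ) := by exact_mod_cast (by omega : 1 ≤ p - s)
          have hxps1 : (1:ℝ) ≤ x^(p-s-1) := by
            calc (1:ℝ) = 1^(p-s-1) := (one_pow _).symm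
              _ ≤ x^(p-s-1) := pow_le_pow_left₀ (by norm_num) hx1 _
          rcases Nat.eq_or_lt_of_le hsr with hrs0 | hrs0
          · -- r = s
            have hz : ((r-s:ℕ):ℝ) = 0 := by
              have : r - s = 0 := by omega
              rw [this]; norm_num
            simp only [hψ'def, hz]
            nlinarith
          · -- s < r
            have hid : ψ' x = x^(r-s-1) * (((p-s:ℕ):ℝ)*x^(p-r) - ((r-s:ℕ):ℝ)) := by
              have p1 : x^(r-s-1) * x^(p-r) = x^(p-s-1) := by rw [← pow_add]; congr 1; omega
              simp only [hψ'def]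
              linear_combination (-((p-s:ℕ):ℝ))*p1
            have hxpr : c ≤ x^(p-r) := by
              calc c ≤ x := hcx
                _ = x^1 := (pow_one x).symm
                _ ≤ x^(p-r) := pow_le_pow_right₀ hx1 (by omega)
            have hrsle : ((r-s:ℕ):ℝ) + 1 ≤ ((p-s:ℕ):ℝ) := by
              exact_mod_cast (by omega : (r-s) + 1 ≤ p - s)
            have hw : c - 1 ≤ ((p-s:ℕ):ℝ)*x^(p-r) - ((r-s:ℕ):ℝ) := by nlinarith
            have hxrs1 : (1:ℝ) ≤ x^(r-s-1) := by
              calc (1:ℝ) = 1^(r-s-1) := (one_pow _).symm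
                _ ≤ x^(r-s-1) := pow_le_pow_left₀ (by norm_num) hx1 _
            rw [hid]
            nlinarith
        have hEψ : Set.Ioo c 2 ∩ {x | |x^p + x^q - x^r - x^s| < 2} ⊆
            Set.Icc c 2 ∩ {x | |ψ x| < 3*((c:ℝ)^(s-q))⁻¹} ∩ {x | c - 1 ≤ ψ' x} := by
          intro x hx
          have hxI := Set.Ioo_subset_Icc_self hx.1
          have hcx : c ≤ x := hxI.1
          have hx1 : (1:ℝ) ≤ x := le_trans hc.le hcx
          refine ⟨⟨hxI, ?_⟩, hψlow x hxI⟩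
          show |ψ x| < 3*((c:ℝ)^(s-q))⁻¹
          have e1 : x^s * x^(p-s) = x^p := by rw [← pow_add]; congr 1; omega
          have e2 : x^s * x^(r-s) = x^r := by rw [← pow_add]; congr 1; omega
          have e3 : x^q * x^(s-q) = x^s := by rw [← pow_add]; congr 1; omega
          have hfψ : x^s * ψ x = (x^p + x^q - x^r - x^s) - x^q := by
            simp only [hψdef]
            linear_combination e1 - e2
          have hxq1 : (1:ℝ) ≤ x^q := by
            calc (1:ℝ) = 1^q := (one_pow _).symm
              _ ≤ x^q := pow_le_pow_left₀ (by norm_num) hx1 _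
          have h2 : |x^p + x^q - x^r - x^s| < 2 := hx.2
          have h5 : |x^s * ψ x| < 3 * x^q := by
            rw [hfψ]
            have := abs_sub_abs_le_abs_sub (x^p + x^q - x^r - x^s) (x^q)
            have h6 : |(x^p + x^q - x^r - x^s) - x^q| ≤ |x^p + x^q - x^r - x^s| + |x^q| :=
              abs_sub (x^p + x^q - x^r - x^s) (x^q)
            have h7 : |x^q| = x^q := abs_of_pos (by linarith)
            nlinarith
          have hxs0 : (0:ℝ) < x^s := by positivity
          have hxq0 : (0:ℝ) < x^q := by linarith
          have hxsq0 : (0:ℝ) < x^(s-q) := by positivity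
          rw [abs_mul, abs_of_pos hxs0] at h5
          -- x^s = x^q * x^{s-q}
          have h8 : x^q * (x^(s-q) * |ψ x|) < 3 * x^q := by
            calc x^q * (x^(s-q) * |ψ x|) = x^s * |ψ x| := by rw [← e3]; ring
              _ < 3 * x^q := h5
          have h9 : x^(s-q) * |ψ x| < 3 := by
            by_contra hcon
            push_neg at hcon
            nlinarith
          have h10 : (c:ℝ)^(s-q) ≤ x^(s-q) := pow_le_pow_left₀ hc0.le hcx _
          have hcsq0 : (0:ℝ) < (c:ℝ)^(s-q) := by positivity
          have h11 : (c:ℝ)^(s-q) * |ψ x| < 3 := by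
            have := mul_le_mul_of_nonneg_right h10 (abs_nonneg (ψ x))
            linarith
          rw [← lt_div_iff₀' hcsq0] at h11
          rw [mul_comm 3 ((c:ℝ)^(s-q))⁻¹, ← div_eq_inv_mul]
          exact h11
        refine le_trans (measure_mono hEψ) (le_trans
          (small_of_deriv ψ ψ' hdψ hcψ' c 2 (3*((c:ℝ)^(s-q))⁻¹) (c-1) hc1
            (fun x hx => le_trans hc1.le (hψlow x (Set.Ioo_subset_Icc_self hx)))) ?_)
        apply ENNReal.ofReal_le_ofReal
        have e12 : 2*(3*((c:ℝ)^(s-q))⁻¹)/(c-1) = (6/(c-1)) * ((c:ℝ)^(s-q))⁻¹ := by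
          rw [div_eq_mul_inv, div_eq_mul_inv]
          ring
        rw [e12]
        exact final_step c CC (6/(c-1)) hc 0 (s-q) (p/7) (by positivity)
          (by simpa using hC3) (by omega)
      · -- chain case 2
        push_neg at hq2
        have hchain := chain c hc (p-q) (r-q) (s-q) (by omega) (by omega) (by omega)
          (2*((c:ℝ)^q)⁻¹) ((((c:ℝ)^(q/3))⁻¹)^2) (((c:ℝ)^(q/3))⁻¹)
          (by positivity) (by positivity)
        refine le_trans (le_trans (measure_mono hEh) hchain) ?_
        set w := (c:ℝ)^(q/3) with hwdef
        have hw0 : (0:ℝ) < w := by positivity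
        have hw1 : (1:ℝ) ≤ w := by
          rw [hwdef]
          calc (1:ℝ) = 1^(q/3) := (one_pow _).symm
            _ ≤ c^(q/3) := pow_le_pow_left₀ (by norm_num) hc.le _
        have hcq0 : (0:ℝ) < (c:ℝ)^q := by positivity
        have hw3 : w^3 ≤ (c:ℝ)^q := by
          rw [hwdef, ← pow_mul]
          exact pow_le_pow_right₀ hc.le (by omega)
        have hterm1 : 2*(2*((c:ℝ)^q)⁻¹)/(w⁻¹^2) ≤ 4*w⁻¹ := by
          have e6 : 2*(2*((c:ℝ)^q)⁻¹)/(w⁻¹^2) = 4*w^2/((c:ℝ)^q) := by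
            rw [inv_pow, div_eq_mul_inv, inv_inv, div_eq_mul_inv]
            ring
          rw [e6, div_le_iff₀ hcq0]
          have hinv : w⁻¹ * w = 1 := inv_mul_cancel₀ (ne_of_gt hw0)
          nlinarith
        have hterm2 : 2*(w⁻¹^2)/(w⁻¹) ≤ 2*w⁻¹ := by
          have hinv : w⁻¹ * w = 1 := inv_mul_cancel₀ (ne_of_gt hw0)
          have heq : 2*(w⁻¹^2)/(w⁻¹) = 2*w⁻¹ := by
            rw [div_eq_mul_inv, inv_inv]
            linear_combination (2*w⁻¹) * hinv
          linarith
        have hbig : ENNReal.ofReal (2*(2*((c:ℝ)^q)⁻¹)/(w⁻¹^2))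
              + ENNReal.ofReal (2*(2*((c:ℝ)^q)⁻¹)/(w⁻¹^2))
              + ENNReal.ofReal (2*(2*((c:ℝ)^q)⁻¹)/(w⁻¹^2))
              + (ENNReal.ofReal (2*(w⁻¹^2)/(w⁻¹)) + ENNReal.ofReal (2*(w⁻¹^2)/(w⁻¹))
                + ENNReal.ofReal (4*(w⁻¹)))
            ≤ ENNReal.ofReal (20*w⁻¹) := by
          have hw4 : (0:ℝ) ≤ 4*w⁻¹ := by positivity
          have hw2 : (0:ℝ) ≤ 2*w⁻¹ := by positivity
          calc _ ≤ ENNReal.ofReal (4*w⁻¹) + ENNReal.ofReal (4*w⁻¹) + ENNReal.ofReal (4*w⁻¹)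
              + (ENNReal.ofReal (2*w⁻¹) + ENNReal.ofReal (2*w⁻¹) + ENNReal.ofReal (4*w⁻¹)) := by
                gcongr <;> first
                  | exact ENNReal.ofReal_le_ofReal hterm1
                  | exact ENNReal.ofReal_le_ofReal hterm2
                  | exact le_refl _
            _ = ENNReal.ofReal (20*w⁻¹) := by
                have e20 : (20:ℝ)*w⁻¹ = 4*w⁻¹+4*w⁻¹+4*w⁻¹+(2*w⁻¹+2*w⁻¹+4*w⁻¹) := by ring
                rw [e20]
                rw [ENNReal.ofReal_add (by linarith) (by linarith)]
                rw [ENNReal.ofReal_add (by linarith) (by linarith)]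
                rw [ENNReal.ofReal_add (by linarith) (by linarith)]
                rw [ENNReal.ofReal_add (by linarith) (by linarith)]
                rw [ENNReal.ofReal_add (by linarith) (by linarith)]
        refine le_trans hbig (ENNReal.ofReal_le_ofReal ?_)
        rw [hwdef]
        exact final_step c CC 20 hc (2*(G+L)) (q/3) (p/7) (by norm_num) hC4 (by omega)


lemma gap_ge (c x : ℝ) (hc : 1 < c) (hx : c ≤ x) (N n m : ℕ)
    (hdet : 2 < (c-1)*c^N) (hNn : N ≤ n) (hnm : n < m) :
    2 ≤ x^m - x^n := by
  have hc0 : (0:ℝ) < c := by linarith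
  have hx1 : (1:ℝ) ≤ x := by linarith
  have h1 : (c:ℝ)^N ≤ x^n :=
    le_trans (pow_le_pow_right₀ hc.le hNn) (pow_le_pow_left₀ hc0.le hx n)
  have h2 : (c-1)*c^N ≤ (x-1)*x^n := by
    apply mul_le_mul (by linarith) h1 (by positivity) (by linarith)
  have h3 : x*x^n ≤ x^m := by
    rw [← pow_succ']
    exact pow_le_pow_right₀ hx1 (by omega)
  nlinarith

lemma core4 (c x : ℝ) (hc : 1 < c) (hcx : c ≤ x) (N p q r s : ℕ)
    (hdet : 2 < (c-1)*c^N)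
    (hNp : N ≤ p) (hNq : N ≤ q) (hNr : N ≤ r) (hNs : N ≤ s)
    (hnd1 : ¬(p = r ∧ q = s)) (hnd2 : ¬(p = s ∧ q = r))
    (hqp : q ≤ p) (hsr : s ≤ r) (hrp : r ≤ p)
    (hf : |x^p + x^q - x^r - x^s| < 2) :
    ∃ p' q' r' s', N ≤ q' ∧ r' < p' ∧ s' ≤ r' ∧ q' < s' ∧
      |x^p' + x^q' - x^r' - x^s'| < 2 := by
  rcases eq_or_lt_of_le hrp with hpr | hpr
  · -- r = p
    have hqs : q ≠ s := fun h => hnd1 ⟨hpr.symm, h⟩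
    have hfqs : |x^q - x^s| < 2 := by
      have he : x^p + x^q - x^r - x^s = x^q - x^s := by rw [hpr]; ring
      rwa [he] at hf
    rcases lt_or_gt_of_ne hqs with h | h
    · exfalso
      have hg := gap_ge c x hc hcx N q s hdet hNq h
      have := le_abs_self (x^s - x^q)
      rw [abs_sub_comm] at hfqs
      linarith
    · exfalso
      have hg := gap_ge c x hc hcx N s q hdet hNs h
      have := le_abs_self (x^q - x^s)
      linarith
  · rcases le_or_gt s q with hsq | hqs'
    · exfalso
      have h1 : (2:ℝ) ≤ x^p - x^r := gap_ge c x hc hcx N r p hdet hNr hpr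
      have h2 : (0:ℝ) ≤ x^q - x^s := by
        have hx1 : (1:ℝ) ≤ x := by linarith
        have := pow_le_pow_right₀ hx1 hsq
        linarith
      have := le_abs_self (x^p + x^q - x^r - x^s)
      linarith
    · exact ⟨p, q, r, s, hNq, hpr, hsr, hqs', hf⟩

lemma core3 (c x : ℝ) (hc : 1 < c) (hcx : c ≤ x) (N p q r s : ℕ)
    (hdet : 2 < (c-1)*c^N)
    (hNp : N ≤ p) (hNq : N ≤ q) (hNr : N ≤ r) (hNs : N ≤ s)
    (hnd1 : ¬(p = r ∧ q = s)) (hnd2 : ¬(p = s ∧ q = r))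
    (hqp : q ≤ p) (hsr : s ≤ r)
    (hf : |x^p + x^q - x^r - x^s| < 2) :
    ∃ p' q' r' s', N ≤ q' ∧ r' < p' ∧ s' ≤ r' ∧ q' < s' ∧
      |x^p' + x^q' - x^r' - x^s'| < 2 := by
  rcases le_total r p with hrp | hrp
  · exact core4 c x hc hcx N p q r s hdet hNp hNq hNr hNs hnd1 hnd2 hqp hsr hrp hf
  · refine core4 c x hc hcx N r s p q hdet hNr hNs hNp hNq ?_ ?_ hsr hqp hrp ?_
    · rintro ⟨h1, h2⟩; exact hnd1 ⟨h1.symm, h2.symm⟩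
    · rintro ⟨h1, h2⟩; exact hnd2 ⟨h2.symm, h1.symm⟩
    · have he : x^r + x^s - x^p - x^q = -(x^p + x^q - x^r - x^s) := by ring
      rw [he, abs_neg]
      exact hf

lemma core2 (c x : ℝ) (hc : 1 < c) (hcx : c ≤ x) (N p q r s : ℕ)
    (hdet : 2 < (c-1)*c^N)
    (hNp : N ≤ p) (hNq : N ≤ q) (hNr : N ≤ r) (hNs : N ≤ s)
    (hnd1 : ¬(p = r ∧ q = s)) (hnd2 : ¬(p = s ∧ q = r))
    (hqp : q ≤ p)
    (hf : |x^p + x^q - x^r - x^s| < 2) :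
    ∃ p' q' r' s', N ≤ q' ∧ r' < p' ∧ s' ≤ r' ∧ q' < s' ∧
      |x^p' + x^q' - x^r' - x^s'| < 2 := by
  rcases le_total s r with hsr | hsr
  · exact core3 c x hc hcx N p q r s hdet hNp hNq hNr hNs hnd1 hnd2 hqp hsr hf
  · refine core3 c x hc hcx N p q s r hdet hNp hNq hNs hNr ?_ ?_ hqp hsr ?_
    · rintro ⟨h1, h2⟩; exact hnd2 ⟨h1, h2⟩
    · rintro ⟨h1, h2⟩; exact hnd1 ⟨h1, h2⟩
    · have he : x^p + x^q - x^s - x^r = x^p + x^q - x^r - x^s := by ring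
      rw [he]
      exact hf

lemma reduce (c x : ℝ) (hc : 1 < c) (hcx : c ≤ x) (N p q r s : ℕ)
    (hdet : 2 < (c-1)*c^N)
    (hNp : N ≤ p) (hNq : N ≤ q) (hNr : N ≤ r) (hNs : N ≤ s)
    (hnd1 : ¬(p = r ∧ q = s)) (hnd2 : ¬(p = s ∧ q = r))
    (hf : |x^p + x^q - x^r - x^s| < 2) :
    ∃ p' q' r' s', N ≤ q' ∧ r' < p' ∧ s' ≤ r' ∧ q' < s' ∧
      |x^p' + x^q' - x^r' - x^s'| < 2 := by
  rcases le_total q p with hqp | hqp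
  · exact core2 c x hc hcx N p q r s hdet hNp hNq hNr hNs hnd1 hnd2 hqp hf
  · refine core2 c x hc hcx N q p r s hdet hNq hNp hNr hNs ?_ ?_ hqp ?_
    · rintro ⟨h1, h2⟩; exact hnd2 ⟨h2, h1⟩
    · rintro ⟨h1, h2⟩; exact hnd1 ⟨h2, h1⟩
    · have he : x^q + x^p - x^r - x^s = x^p + x^q - x^r - x^s := by ring
      rw [he]
      exact hf

lemma floor_est (x : ℝ) (p q r s : ℕ) (a b cc d : ℤ)
    (hap : a = ⌊x^p⌋) (hbq : b = ⌊x^q⌋) (hcr : cc = ⌊x^r⌋) (hds : d = ⌊x^s⌋)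
    (heq : a + b = cc + d) : |x^p + x^q - x^r - x^s| < 2 := by
  have h1 := Int.floor_le (x^p)
  have h1' := Int.lt_floor_add_one (x^p)
  have h2 := Int.floor_le (x^q)
  have h2' := Int.lt_floor_add_one (x^q)
  have h3 := Int.floor_le (x^r)
  have h3' := Int.lt_floor_add_one (x^r)
  have h4 := Int.floor_le (x^s)
  have h4' := Int.lt_floor_add_one (x^s)
  have hcast : (a:ℝ) + (b:ℝ) = (cc:ℝ) + (d:ℝ) := by exact_mod_cast heq
  subst hap hbq hcr hds
  push_cast at hcast
  rw [abs_lt]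
  constructor <;> linarith

def Good (x : ℝ) : Prop := ∃ N₀ : ℕ, ∀ a b c d : ℤ,
  (∃ p : ℕ, N₀ ≤ p ∧ a = ⌊x ^ p⌋) →
  (∃ q : ℕ, N₀ ≤ q ∧ b = ⌊x ^ q⌋) →
  (∃ r : ℕ, N₀ ≤ r ∧ c = ⌊x ^ r⌋) →
  (∃ s : ℕ, N₀ ≤ s ∧ d = ⌊x ^ s⌋) →
  a + b = c + d → ({a, b} : Set ℤ) = ({c, d} : Set ℤ)

set_option maxHeartbeats 1000000 in
lemma percs (c : ℝ) (hc : 1 < c) (hc2 : c < 2) :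
    volume ({x : ℝ | ¬ Good x} ∩ Set.Ioo c 2) = 0 := by
  have hc0 : (0:ℝ) < c := by linarith
  have hc1 : (0:ℝ) < c - 1 := by linarith
  obtain ⟨G, hG⟩ := pow_unbounded_of_one_lt (8:ℝ) hc
  obtain ⟨L, hL⟩ := pow_unbounded_of_one_lt (2/(c-1)) hc
  set CCv : ℝ := 16 + 8*c^G/(c-1) + 6/(c-1) + 20*c^(2*(G+L)) with hCCv
  have hCC0 : 0 < CCv := by
    rw [hCCv]
    have u1 : (0:ℝ) ≤ 8*c^G/(c-1) := by positivity
    have u2 : (0:ℝ) ≤ 6/(c-1) := by positivity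
    have u3 : (0:ℝ) ≤ 20*c^(2*(G+L)) := by positivity
    linarith
  set gg : ℕ → ℝ := fun n => (n:ℝ)^3 * (CCv * ((c:ℝ)^(n/7))⁻¹) with hggdef
  have hggnn : ∀ n, 0 ≤ gg n := by
    intro n
    simp only [hggdef]
    have h1 : (0:ℝ) ≤ ((c:ℝ)^(n/7))⁻¹ := inv_nonneg.2 (pow_nonneg hc0.le _)
    have h2 : (0:ℝ) ≤ (n:ℝ)^3 := by positivity
    exact mul_nonneg h2 (mul_nonneg hCC0.le h1)
  have hSG : Summable gg := by
    set ν : ℝ := (c⁻¹) ^ ((1:ℝ)/7) with hν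
    have hci : c⁻¹ < 1 := inv_lt_one_of_one_lt₀ hc
    have hci0 : (0:ℝ) < c⁻¹ := by positivity
    have hν1 : ν < 1 := Real.rpow_lt_one hci0.le hci (by norm_num)
    have hν0 : (0:ℝ) < ν := Real.rpow_pos_of_pos hci0 _
    have hbase : Summable (fun n : ℕ => (n:ℝ)^3 * ν^n) :=
      summable_pow_mul_geometric_of_norm_lt_one 3
        (by rw [Real.norm_eq_abs, abs_of_pos hν0]; exact hν1)
    have key : ∀ n : ℕ, ((c:ℝ)^(n/7))⁻¹ ≤ c * ν^n := by
      intro n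
      have e1 : ((c:ℝ)^(n/7))⁻¹ = (c⁻¹:ℝ)^((n/7 : ℕ):ℝ) := by
        rw [Real.rpow_natCast, inv_pow]
      have e3 : ν^n = (c⁻¹:ℝ) ^ (((1:ℝ)/7)*(n:ℝ)) := by
        rw [Real.rpow_mul hci0.le, Real.rpow_natCast]
      have hfl : (n:ℝ)*((1:ℝ)/7) - 1 ≤ ((n/7 : ℕ):ℝ) := by
        have h7 : n < 7*(n/7) + 7 := by omega
        have h8 : (n:ℝ) < 7*((n/7 : ℕ):ℝ) + 7 := by exact_mod_cast h7
        linarith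
      have hmono := Real.rpow_le_rpow_of_exponent_ge hci0 hci.le hfl
      have e4 : (c⁻¹:ℝ) ^ ((n:ℝ)*((1:ℝ)/7) - 1) = c * (c⁻¹:ℝ) ^ (((1:ℝ)/7)*(n:ℝ)) := by
        rw [Real.rpow_sub hci0, Real.rpow_one, mul_comm ((n:ℝ)) ((1:ℝ)/7),
          div_eq_mul_inv, inv_inv, mul_comm]
      rw [e1, e3, ← e4]
      exact hmono
    refine Summable.of_nonneg_of_le hggnn (fun n => ?_) (hbase.mul_left (CCv * c))
    simp only [hggdef]
    have hn3 : (0:ℝ) ≤ (n:ℝ)^3 := by positivity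
    have h1 : CCv * ((c:ℝ)^(n/7))⁻¹ ≤ CCv * (c*ν^n) :=
      mul_le_mul_of_nonneg_left (key n) hCC0.le
    calc (n:ℝ)^3 * (CCv * ((c:ℝ)^(n/7))⁻¹) ≤ (n:ℝ)^3 * (CCv * (c*ν^n)) :=
        mul_le_mul_of_nonneg_left h1 hn3
      _ = CCv * c * ((n:ℝ)^3 * ν^n) := by ring
  set Es : ℕ → ℕ×ℕ×ℕ → Set ℝ := fun n t =>
    Set.Ioo c 2 ∩ {x | |x^n + x^t.1 - x^t.2.1 - x^t.2.2| < 2} with hEs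
  set Fp : ℕ → Finset (ℕ×ℕ×ℕ) := fun n =>
    (Finset.range n ×ˢ Finset.range n ×ˢ Finset.range n).filter
      (fun t => t.2.1 < n ∧ t.2.2 ≤ t.2.1 ∧ t.1 < t.2.2) with hFp
  set W : ℕ → Set ℝ := fun n => ⋃ t ∈ Fp n, Es n t with hW
  have hWb : ∀ n : ℕ, volume (W n) ≤ ENNReal.ofReal (gg n) := by
    intro n
    simp only [hW]
    refine le_trans (measure_biUnion_finset_le _ _) ?_
    have hle : ∀ t ∈ Fp n, volume (Es n t) ≤ ENNReal.ofReal (CCv * ((c:ℝ)^(n/7))⁻¹) := by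
      intro t ht
      simp only [hFp, Finset.mem_filter] at ht
      simp only [hEs]
      exact tuple_bound c hc hc2 G L hG hL n t.1 t.2.1 t.2.2 ht.2.1 ht.2.2.1 ht.2.2.2
    refine le_trans (Finset.sum_le_sum hle) ?_
    rw [Finset.sum_const, nsmul_eq_mul]
    have hcard : (Fp n).card ≤ n^3 := by
      simp only [hFp]
      refine le_trans (Finset.card_filter_le _ _) ?_
      have e9 : (Finset.range n ×ˢ Finset.range n ×ˢ Finset.range n).card = n^3 := by
        simp [Finset.card_product]
        ring
      rw [e9]
    calc ((Fp n).card : ENNReal) * ENNReal.ofReal (CCv * ((c:ℝ)^(n/7))⁻¹)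
        ≤ ((n^3 : ℕ) : ENNReal) * ENNReal.ofReal (CCv * ((c:ℝ)^(n/7))⁻¹) :=
          mul_le_mul_left (by exact_mod_cast hcard) _
      _ = ENNReal.ofReal (gg n) := by
          rw [← ENNReal.ofReal_natCast (n^3), ← ENNReal.ofReal_mul (by positivity)]
          simp only [hggdef]
          congr 1
          push_cast
          ring
  have hdetN : ∀ N : ℕ, L ≤ N → 2 < (c-1)*c^N := by
    intro N hLN
    have h1 : (c:ℝ)^L ≤ c^N := pow_le_pow_right₀ hc.le hLN
    have h2 : 2 < (c-1)*c^L := by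
      rw [div_lt_iff₀ hc1] at hL
      linarith
    have h3 := mul_le_mul_of_nonneg_left h1 hc1.le
    linarith
  have hcover : ∀ N : ℕ, L ≤ N →
      ({x : ℝ | ¬ Good x} ∩ Set.Ioo c 2) ⊆ ⋃ j : ℕ, W (j + N) := by
    intro N hLN x hx
    obtain ⟨hxB, hxI⟩ := hx
    rw [Set.mem_setOf_eq] at hxB
    simp only [Good] at hxB
    push_neg at hxB
    obtain ⟨a, b, cc, d, ⟨p, hp, hap⟩, ⟨q, hq, hbq⟩, ⟨r, hr, hcr⟩, ⟨s, hs, hds⟩, heq, hne⟩ :=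
      hxB N
    have hfl : |x^p + x^q - x^r - x^s| < 2 := floor_est x p q r s a b cc d hap hbq hcr hds heq
    have hnd1 : ¬(p = r ∧ q = s) := by
      rintro ⟨h1, h2⟩
      subst h1; subst h2
      exact hne (by rw [hap, hbq, hcr, hds])
    have hnd2 : ¬(p = s ∧ q = r) := by
      rintro ⟨h1, h2⟩
      subst h1; subst h2
      apply hne
      rw [hap, hbq, hcr, hds]
      exact Set.pair_comm _ _
    obtain ⟨p', q', r', s', hq'N, hr'p', hs'r', hq's', hf'⟩ :=
      reduce c x hc hxI.1.le N p q r s (hdetN N hLN) hp hq hr hs hnd1 hnd2 hfl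
    refine Set.mem_iUnion.2 ⟨p' - N, ?_⟩
    have hp'N : N ≤ p' := by omega
    have hpe : p' - N + N = p' := by omega
    simp only [hW]
    rw [hpe]
    have hmem : ((q', r', s') : ℕ×ℕ×ℕ) ∈ Fp p' := by
      simp only [hFp, Finset.mem_filter, Finset.mem_product, Finset.mem_range]
      exact ⟨⟨by omega, by omega, by omega⟩, hr'p', hs'r', hq's'⟩
    have hx2 : x ∈ Es p' (q', r', s') := by
      simp only [hEs]
      exact ⟨hxI, hf'⟩
    exact Set.mem_biUnion hmem hx2
  have hmain : ∀ N : ℕ, L ≤ N →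
      volume ({x : ℝ | ¬ Good x} ∩ Set.Ioo c 2) ≤ ENNReal.ofReal (∑' j : ℕ, gg (j + N)) := by
    intro N hLN
    refine le_trans (measure_mono (hcover N hLN)) ?_
    refine le_trans (measure_iUnion_le _) ?_
    refine le_trans (ENNReal.tsum_le_tsum (fun j => hWb (j + N))) ?_
    rw [ENNReal.ofReal_tsum_of_nonneg (fun j => hggnn (j + N))
      ((summable_nat_add_iff N).2 hSG)]

  have htail : Tendsto (fun N => ENNReal.ofReal (∑' j : ℕ, gg (j + N))) atTop (𝓝 0) := by
    have h0 := tendsto_sum_nat_add gg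
    have h1 := ENNReal.tendsto_ofReal h0
    simpa using h1
  have hfin : volume ({x : ℝ | ¬ Good x} ∩ Set.Ioo c 2) ≤ 0 := by
    refine ge_of_tendsto htail ?_
    filter_upwards [eventually_ge_atTop L] with N hN
    exact hmain N hN
  exact le_antisymm hfin (by simp)

end Stmt7

theorem stmt_7 :
    ∀ᵐ x ∂(volume.restrict (Set.Ioo (1 : ℝ) 2)),
      ∃ N₀ : ℕ, ∀ a b c d : ℤ,
        (∃ p : ℕ, N₀ ≤ p ∧ a = ⌊x ^ p⌋) →
        (∃ q : ℕ, N₀ ≤ q ∧ b = ⌊x ^ q⌋) →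
        (∃ r : ℕ, N₀ ≤ r ∧ c = ⌊x ^ r⌋) →
        (∃ s : ℕ, N₀ ≤ s ∧ d = ⌊x ^ s⌋) →
        a + b = c + d → ({a, b} : Set ℤ) = ({c, d} : Set ℤ) := by
  have hnull : ∀ k : ℕ, volume ({x : ℝ | ¬ Stmt7.Good x} ∩ Set.Ioo (1 + 1/((k:ℝ)+2)) 2) = 0 := by
    intro k
    have hk0 : (0:ℝ) < (k:ℝ) + 2 := by positivity
    refine Stmt7.percs _ ?_ ?_
    · have : (0:ℝ) < 1/((k:ℝ)+2) := by positivity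
      linarith
    · have : 1/((k:ℝ)+2) < 1 := by
        rw [div_lt_one hk0]; linarith
      linarith
  have key : ∀ᵐ x ∂(volume.restrict (Set.Ioo (1 : ℝ) 2)), Stmt7.Good x := by
    rw [MeasureTheory.ae_iff, Measure.restrict_apply' measurableSet_Ioo]
    refine measure_mono_null ?_ (measure_iUnion_null hnull)
    intro x hx
    obtain ⟨hxB, hxI⟩ := hx
    obtain ⟨n, hn⟩ := exists_nat_one_div_lt (show (0:ℝ) < x - 1 by
      have := hxI.1; linarith)
    refine Set.mem_iUnion.2 ⟨n, hxB, ?_, hxI.2⟩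
    have h1 : (1:ℝ)/((n:ℝ)+2) ≤ 1/((n:ℝ)+1) := by
      apply one_div_le_one_div_of_le
      · positivity
      · linarith
    linarith [hn]
  exact key
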